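/- For all (x,U), (y,V) ∈ X × T* and every ordinal α: H^α_{x,U} = H^α_{y,V} if and only if (x,U) ∼_α (y,V). -/

import Mathlib

noncomputable section

variable {G X : Type*} [TopologicalSpace G] [Group G] [IsTopologicalGroup G]
  [TopologicalSpace X] [MulAction G X] [ContinuousSMul G X]

/-- The closure of the partial orbit `U · x`. -/
def orbCl (U : Set G) (x : X) : Set X :=
  closure ((fun g : G => g • x) '' U)

/-- Hjorth's ordinal-indexed asymmetric relations `(x,U) ≤_α (y,V)`:
`≤₀` is inclusion of orbit closures; `(x,U) ≤_{α+1} (y,V)` iff for every nonempty open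
`U' ⊆ U` there is a nonempty open `V' ⊆ V` with `(y,V') ≤_α (x,U')`; limits are
conjunctions. -/
def hle (α : Ordinal) : X → Set G → X → Set G → Prop :=
  Ordinal.limitRecOn (motive := fun _ => X → Set G → X → Set G → Prop) α
    (fun x U y V => orbCl U x ⊆ orbCl V y)
    (fun _ ih x U y V =>
      ∀ U' : Set G, IsOpen U' → U'.Nonempty → U' ⊆ U →
        ∃ V' : Set G, IsOpen V' ∧ V'.Nonempty ∧ V' ⊆ V ∧ ih y V' x U')
    (fun _ _ ih x U y V => ∀ β hβ, ih β hβ x U y V)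
/-- The symmetric relations `(x,U) ∼_α (y,V)`: `∼₀` is equality of orbit closures;
`∼_{α+1}` requires `∼_α` together with the two back-and-forth conditions; limits are
conjunctions. -/
def hsim (α : Ordinal) : X → Set G → X → Set G → Prop :=
  Ordinal.limitRecOn (motive := fun _ => X → Set G → X → Set G → Prop) α
    (fun x U y V => orbCl U x = orbCl V y)
    (fun _ ih x U y V =>
      ih x U y V ∧
      (∀ U' : Set G, IsOpen U' → U'.Nonempty → U' ⊆ U →
        ∃ V' : Set G, IsOpen V' ∧ V'.Nonempty ∧ V' ⊆ V ∧ ih y V' x U') ∧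
      (∀ V' : Set G, IsOpen V' → V'.Nonempty → V' ⊆ V →
        ∃ U' : Set G, IsOpen U' ∧ U'.Nonempty ∧ U' ⊆ U ∧ ih x U' y V'))
    (fun _ _ ih x U y V => ∀ β hβ, ih β hβ x U y V)

open scoped Classical

/-- Hjorth's invariant functions `H^α_{x,U}`, represented as a pair consisting of
`I_{x,U}(0) = closure (U·x)` together with the map sending a triple `((y,V),β)` with
`V ∈ T*` and `β < α` to the value (`some true` for `1`, `some false` for `0`) of
`H^α_{x,U}(y,V,β)`, and `none` outside the domain.  `H^{β+1}_{x,U}(y,V,β) = 1` iff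
there is a nonempty open `U' ⊆ U` with `H^β_{x,U'} = H^β_{y,V}`; the restriction
property `H^α_{x,U} ↾ β = H^β_{x,U}` holds by construction. -/
noncomputable def hH (α : Ordinal) (x : X) (U : Set G) :
    Set X × ((X × Set G) × Ordinal → Option Bool) :=
  ⟨orbCl U x,
    fun q =>
      if h : q.2 < α ∧ IsOpen q.1.2 ∧ q.1.2.Nonempty then
        some (if (∃ U' : Set G, IsOpen U' ∧ U'.Nonempty ∧ U' ⊆ U ∧
            hH q.2 x U' = hH q.2 q.1.1 q.1.2) then true else false)
      else none⟩
termination_by α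
decreasing_by all_goals exact h.1


section AuxLemmas
set_option linter.unusedSectionVars false
set_option linter.unusedVariables false

lemma hsim_zero (x y : X) (U V : Set G) : hsim 0 x U y V ↔ orbCl U x = orbCl V y := by
  unfold hsim; rw [Ordinal.limitRecOn_zero]

lemma hsim_succ (α : Ordinal) (x y : X) (U V : Set G) :
    hsim (Order.succ α) x U y V ↔
      hsim α x U y V ∧
      (∀ U' : Set G, IsOpen U' → U'.Nonempty → U' ⊆ U →
        ∃ V' : Set G, IsOpen V' ∧ V'.Nonempty ∧ V' ⊆ V ∧ hsim α y V' x U') ∧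
      (∀ V' : Set G, IsOpen V' → V'.Nonempty → V' ⊆ V →
        ∃ U' : Set G, IsOpen U' ∧ U'.Nonempty ∧ U' ⊆ U ∧ hsim α x U' y V') := by
  unfold hsim; rw [Ordinal.limitRecOn_succ]

lemma hsim_limit {α : Ordinal} (h : Order.IsSuccLimit α) (x y : X) (U V : Set G) :
    hsim α x U y V ↔ ∀ β < α, hsim β x U y V := by
  unfold hsim; rw [Ordinal.limitRecOn_limit _ _ _ _ h]

lemma hsim_refl (α : Ordinal) : ∀ (x : X) (U : Set G), hsim α x U x U := by
  induction α using Ordinal.induction with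
  | _ α IH =>
  rcases Ordinal.zero_or_succ_or_isSuccLimit α with rfl | ⟨β, rfl⟩ | hlim
  · intro x U; exact (hsim_zero x x U U).2 rfl
  · intro x U
    refine (hsim_succ β x x U U).2 ⟨IH β (Order.lt_succ β) x U, ?_, ?_⟩ <;>
      exact fun U' hU' hne hsub => ⟨U', hU', hne, hsub, IH β (Order.lt_succ β) x U'⟩
  · intro x U
    exact (hsim_limit hlim x x U U).2 fun β hβ => IH β hβ x U

lemma hsim_trans (α : Ordinal) : ∀ (x y z : X) (U V W : Set G),
    hsim α x U y V → hsim α y V z W → hsim α x U z W := by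
  induction α using Ordinal.induction with
  | _ α IH =>
  rcases Ordinal.zero_or_succ_or_isSuccLimit α with rfl | ⟨β, rfl⟩ | hlim
  · intro x y z U V W h1 h2
    exact (hsim_zero x z U W).2 (((hsim_zero x y U V).1 h1).trans ((hsim_zero y z V W).1 h2))
  · intro x y z U V W h1 h2
    obtain ⟨h1a, h1b, h1c⟩ := (hsim_succ β x y U V).1 h1
    obtain ⟨h2a, h2b, h2c⟩ := (hsim_succ β y z V W).1 h2
    have hβ := Order.lt_succ β
    refine (hsim_succ β x z U W).2 ⟨IH β hβ _ _ _ _ _ _ h1a h2a, ?_, ?_⟩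
    · intro U' hU' hne hsub
      obtain ⟨V', hV', hVne, hVsub, hs1⟩ := h1b U' hU' hne hsub
      obtain ⟨W', hW', hWne, hWsub, hs2⟩ := h2b V' hV' hVne hVsub
      exact ⟨W', hW', hWne, hWsub, IH β hβ _ _ _ _ _ _ hs2 hs1⟩
    · intro W' hW' hne hsub
      obtain ⟨V', hV', hVne, hVsub, hs2⟩ := h2c W' hW' hne hsub
      obtain ⟨U', hU', hUne, hUsub, hs1⟩ := h1c V' hV' hVne hVsub
      exact ⟨U', hU', hUne, hUsub, IH β hβ _ _ _ _ _ _ hs1 hs2⟩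
  · intro x y z U V W h1 h2
    exact (hsim_limit hlim x z U W).2 fun β hβ =>
      IH β hβ _ _ _ _ _ _ ((hsim_limit hlim x y U V).1 h1 β hβ)
        ((hsim_limit hlim y z V W).1 h2 β hβ)

lemma hsim_mono (α : Ordinal) : ∀ β ≤ α, ∀ (x y : X) (U V : Set G),
    hsim α x U y V → hsim β x U y V := by
  induction α using Ordinal.induction with
  | _ α IH =>
  intro β hβ x y U V h
  rcases eq_or_lt_of_le hβ with rfl | hβlt
  · exact h
  rcases Ordinal.zero_or_succ_or_isSuccLimit α with rfl | ⟨γ, rfl⟩ | hlim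
  · exact absurd hβlt (not_lt_zero (a := β))
  · exact IH γ (Order.lt_succ γ) β (Order.lt_succ_iff.1 hβlt) x y U V
      ((hsim_succ γ x y U V).1 h).1
  · exact (hsim_limit hlim x y U V).1 h β hβlt

lemma hsim_of_P (α : Ordinal) : ∀ (x y : X) (U V : Set G),
    orbCl U x = orbCl V y →
    (∀ β < α, ∀ (z : X) (W : Set G), IsOpen W → W.Nonempty →
      ((∃ U' : Set G, IsOpen U' ∧ U'.Nonempty ∧ U' ⊆ U ∧ hsim β x U' z W) ↔
       (∃ V' : Set G, IsOpen V' ∧ V'.Nonempty ∧ V' ⊆ V ∧ hsim β y V' z W))) →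
    hsim α x U y V := by
  induction α using Ordinal.induction with
  | _ α IH =>
  intro x y U V h0 hP
  rcases Ordinal.zero_or_succ_or_isSuccLimit α with rfl | ⟨β, rfl⟩ | hlim
  · exact (hsim_zero x y U V).2 h0
  · have hβ := Order.lt_succ β
    refine (hsim_succ β x y U V).2
      ⟨IH β hβ x y U V h0 (fun γ hγ => hP γ (hγ.trans hβ)), ?_, ?_⟩
    · intro U' hU' hne hsub
      exact (hP β hβ x U' hU' hne).1 ⟨U', hU', hne, hsub, hsim_refl β x U'⟩
    · intro V' hV' hne hsub
      exact (hP β hβ y V' hV' hne).2 ⟨V', hV', hne, hsub, hsim_refl β y V'⟩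
  · exact (hsim_limit hlim x y U V).2 fun β hβlt =>
      IH β hβlt x y U V h0 fun γ hγ => hP γ (hγ.trans hβlt)

lemma P_of_hsim (α : Ordinal) (x y : X) (U V : Set G) (h : hsim α x U y V) :
    orbCl U x = orbCl V y ∧
    ∀ β < α, ∀ (z : X) (W : Set G), IsOpen W → W.Nonempty →
      ((∃ U' : Set G, IsOpen U' ∧ U'.Nonempty ∧ U' ⊆ U ∧ hsim β x U' z W) ↔
       (∃ V' : Set G, IsOpen V' ∧ V'.Nonempty ∧ V' ⊆ V ∧ hsim β y V' z W)) := by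
  constructor
  · exact (hsim_zero x y U V).1 (hsim_mono α 0 (zero_le (a := α)) x y U V h)
  · intro β hβ z W hW hWne
    have hs : hsim (Order.succ β) x U y V :=
      hsim_mono α _ (Order.succ_le_of_lt hβ) _ _ _ _ h
    obtain ⟨_, hb, hc⟩ := (hsim_succ β x y U V).1 hs
    constructor
    · rintro ⟨U', hU', hne, hsub, hxz⟩
      obtain ⟨V', hV', hVne, hVsub, hyx⟩ := hb U' hU' hne hsub
      exact ⟨V', hV', hVne, hVsub, hsim_trans β _ _ _ _ _ _ hyx hxz⟩
    · rintro ⟨V', hV', hne, hsub, hyz⟩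
      obtain ⟨U', hU', hUne, hUsub, hxy⟩ := hc V' hV' hne hsub
      exact ⟨U', hU', hUne, hUsub, hsim_trans β _ _ _ _ _ _ hxy hyz⟩

lemma bif_eq {p q : Prop} [Decidable p] [Decidable q] :
    (if p then (true : Bool) else false) = (if q then true else false) ↔ (p ↔ q) := by
  by_cases hp : p <;> by_cases hq : q <;> simp [hp, hq]

lemma hH_eq_iff (α : Ordinal) (x y : X) (U V : Set G) :
    hH α x U = hH α y V ↔
      orbCl U x = orbCl V y ∧
      ∀ β < α, ∀ (z : X) (W : Set G), IsOpen W → W.Nonempty →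
        ((∃ U' : Set G, IsOpen U' ∧ U'.Nonempty ∧ U' ⊆ U ∧ hH β x U' = hH β z W) ↔
         (∃ V' : Set G, IsOpen V' ∧ V'.Nonempty ∧ V' ⊆ V ∧ hH β y V' = hH β z W)) := by
  conv_lhs => rw [hH, hH]
  rw [Prod.mk.injEq]
  refine and_congr_right fun _ => ?_
  rw [funext_iff]
  constructor
  · intro h β hβ z W hW hWne
    have := h ((z, W), β)
    rw [dif_pos ⟨hβ, hW, hWne⟩, dif_pos ⟨hβ, hW, hWne⟩, Option.some.injEq, bif_eq] at this
    exact this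
  · intro h q
    by_cases hq : q.2 < α ∧ IsOpen q.1.2 ∧ q.1.2.Nonempty
    · rw [dif_pos hq, dif_pos hq, Option.some.injEq, bif_eq]
      exact h q.2 hq.1 q.1.1 q.1.2 hq.2.1 hq.2.2
    · rw [dif_neg hq, dif_neg hq]

lemma hH_eq_iff_hsim_aux (α : Ordinal) : ∀ (x y : X) (U V : Set G),
    IsOpen U → U.Nonempty → IsOpen V → V.Nonempty →
    (hH α x U = hH α y V ↔ hsim α x U y V) := by
  induction α using Ordinal.induction with
  | _ α IH =>
  intro x y U V hU hUne hV hVne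
  rw [hH_eq_iff]
  constructor
  · rintro ⟨h0, hP⟩
    refine hsim_of_P α x y U V h0 fun β hβ z W hW hWne => ?_
    have key := hP β hβ z W hW hWne
    constructor
    · rintro ⟨U', a, b, c, d⟩
      obtain ⟨V', a', b', c', d'⟩ :=
        key.1 ⟨U', a, b, c, (IH β hβ x z U' W a b hW hWne).2 d⟩
      exact ⟨V', a', b', c', (IH β hβ y z V' W a' b' hW hWne).1 d'⟩
    · rintro ⟨V', a, b, c, d⟩
      obtain ⟨U', a', b', c', d'⟩ :=
        key.2 ⟨V', a, b, c, (IH β hβ y z V' W a b hW hWne).2 d⟩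
      exact ⟨U', a', b', c', (IH β hβ x z U' W a' b' hW hWne).1 d'⟩
  · intro h
    obtain ⟨h0, hP⟩ := P_of_hsim α x y U V h
    refine ⟨h0, fun β hβ z W hW hWne => ?_⟩
    have key := hP β hβ z W hW hWne
    constructor
    · rintro ⟨U', a, b, c, d⟩
      obtain ⟨V', a', b', c', d'⟩ :=
        key.1 ⟨U', a, b, c, (IH β hβ x z U' W a b hW hWne).1 d⟩
      exact ⟨V', a', b', c', (IH β hβ y z V' W a' b' hW hWne).2 d'⟩
    · rintro ⟨V', a, b, c, d⟩
      obtain ⟨U', a', b', c', d'⟩ :=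
        key.2 ⟨V', a, b, c, (IH β hβ y z V' W a b hW hWne).1 d⟩
      exact ⟨U', a', b', c', (IH β hβ x z U' W a' b' hW hWne).2 d'⟩

end AuxLemmas

/-- For all `(x,U), (y,V) ∈ X × T*` and every ordinal `α`:
`H^α_{x,U} = H^α_{y,V}` iff `(x,U) ∼_α (y,V)`. -/
theorem hH_eq_iff_hsim (α : Ordinal) (x y : X) (U V : Set G)
    (hU : IsOpen U) (hUne : U.Nonempty) (hV : IsOpen V) (hVne : V.Nonempty) :
    hH α x U = hH α y V ↔ hsim α x U y V :=
  hH_eq_iff_hsim_aux α x y U V hU hUne hV hVne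

end
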